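/- Let H be a real Hilbert space, let Γ : H → ℝ^s be a continuous linear map, let Ů := ker Γ, and let (φ_i)_{i≥1} be a complete system in H. Set Ů^(N) := span{φ₁,…,φ_N} ∩ Ů. Let J : H → ℝ be convex and continuous, and assume J grows at infinity on Ů. Then J attains its infimum on Ů and on each Ů^(N), and for any choice of minimizers u^(N) of J on Ů^(N): (a) J(u^(N)) converges as N → ∞ to the infimum of J over Ů, and (b) there exist a subsequence (u^(N_k)) and a minimizer ū of J on Ů such that u^(N_k) converges weakly to ū, i.e. ⟨u^(N_k), v⟩ → ⟨ū, v⟩ for every v ∈ H. -/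

import Mathlib

open Filter Topology

section helpers
variable {H : Type*} [NormedAddCommGroup H] [InnerProductSpace ℝ H] [CompleteSpace H]

/-- Nested nonempty closed bounded convex sets in a Hilbert space have nonempty
intersection. -/
lemma nested_inter {C : ℕ → Set H} (hne : ∀ n, (C n).Nonempty)
    (hcl : ∀ n, IsClosed (C n)) (hcv : ∀ n, Convex ℝ (C n))
    (hanti : ∀ m n, m ≤ n → C n ⊆ C m)
    {B : ℝ} (hB : ∀ x ∈ C 0, ‖x‖ ≤ B) :
    (⋂ n, C n).Nonempty := by
  -- distance to zero of each set
  set δ : ℕ → ℝ := fun n => sInf (norm '' C n) with hδdef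
  have himne : ∀ n, (norm '' C n).Nonempty := fun n => (hne n).image _
  have himbdd : ∀ n, BddBelow (norm '' C n) := by
    intro n
    exact ⟨0, by rintro r ⟨x, -, rfl⟩; exact norm_nonneg x⟩
  have hδ0 : ∀ n, 0 ≤ δ n := by
    intro n
    exact le_csInf (himne n) (by rintro r ⟨x, -, rfl⟩; exact norm_nonneg x)
  have hδmono : Monotone δ := by
    intro m n hmn
    exact csInf_le_csInf (himbdd m) (himne n) (Set.image_mono (hanti m n hmn))
  have hδB : ∀ n, δ n ≤ B := by
    intro n
    obtain ⟨x, hx⟩ := hne n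
    calc δ n ≤ ‖x‖ := csInf_le (himbdd n) ⟨x, hx, rfl⟩
      _ ≤ B := hB x (hanti 0 n (Nat.zero_le n) hx)
  set δ' : ℝ := ⨆ n, δ n with hδ'def
  have hδ'le : ∀ n, δ n ≤ δ' := fun n => le_ciSup ⟨B, by rintro r ⟨n, rfl⟩; exact hδB n⟩ n
  have hδtend : Tendsto δ atTop (𝓝 δ') :=
    tendsto_atTop_ciSup hδmono ⟨B, by rintro r ⟨n, rfl⟩; exact hδB n⟩
  -- pick near-minimal-norm points
  have hxch : ∀ n, ∃ x ∈ C n, ‖x‖ < δ n + 1 / (n + 1) := by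
    intro n
    obtain ⟨r, ⟨x, hx, rfl⟩, hr⟩ := Real.lt_sInf_add_pos (himne n)
      (by positivity : (0:ℝ) < 1 / (n + 1))
    exact ⟨x, hx, hr⟩
  choose x hxC hxn using hxch
  -- key bound
  have key : ∀ N m n, N ≤ m → N ≤ n →
      ‖x m - x n‖ ^ 2 ≤ 4 * ((δ' + 1 / (N + 1)) ^ 2 - δ N ^ 2) := by
    intro N m n hm hn
    have hmid : (2:ℝ)⁻¹ • x m + (2:ℝ)⁻¹ • x n ∈ C N :=
      hcv N (hanti N m hm (hxC m)) (hanti N n hn (hxC n)) (by norm_num) (by norm_num)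
        (by norm_num)
    have hmidn : δ N ≤ ‖(2:ℝ)⁻¹ • x m + (2:ℝ)⁻¹ • x n‖ :=
      csInf_le (himbdd N) ⟨_, hmid, rfl⟩
    have hpar := parallelogram_law_with_norm ℝ (x m) (x n)
    have h2 : ‖x m + x n‖ = 2 * ‖(2:ℝ)⁻¹ • x m + (2:ℝ)⁻¹ • x n‖ := by
      rw [← norm_smul_of_nonneg (by norm_num : (0:ℝ) ≤ 2)]
      congr 1
      module
    have hnm : ‖x m‖ ≤ δ' + 1/(N+1) := by
      have h1 : (1:ℝ)/(m+1) ≤ 1/(N+1) := by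
        apply one_div_le_one_div_of_le (by positivity)
        push_cast; exact_mod_cast Nat.succ_le_succ hm
      calc ‖x m‖ ≤ δ m + 1/(m+1) := (hxn m).le
        _ ≤ δ' + 1/(N+1) := add_le_add (hδ'le m) h1
    have hnn : ‖x n‖ ≤ δ' + 1/(N+1) := by
      have h1 : (1:ℝ)/(n+1) ≤ 1/(N+1) := by
        apply one_div_le_one_div_of_le (by positivity)
        push_cast; exact_mod_cast Nat.succ_le_succ hn
      calc ‖x n‖ ≤ δ n + 1/(n+1) := (hxn n).le
        _ ≤ δ' + 1/(N+1) := add_le_add (hδ'le n) h1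
    have hb : (0:ℝ) ≤ δ' + 1/(N+1) := by
      have h01 := (hδ0 0).trans (hδ'le 0)
      have h02 : (0:ℝ) < 1/(N+1) := by positivity
      linarith
    have e1 : ‖x m‖^2 ≤ (δ' + 1/(N+1))^2 := by
      apply pow_le_pow_left₀ (norm_nonneg _) hnm
    have e2 : ‖x n‖^2 ≤ (δ' + 1/(N+1))^2 := by
      apply pow_le_pow_left₀ (norm_nonneg _) hnn
    have e3 : δ N ^ 2 ≤ ‖x m + x n‖^2 / 4 := by
      rw [h2]
      have := pow_le_pow_left₀ (hδ0 N) hmidn 2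
      nlinarith [norm_nonneg ((2:ℝ)⁻¹ • x m + (2:ℝ)⁻¹ • x n)]
    have hpar' : ‖x m - x n‖^2 = 2*‖x m‖^2 + 2*‖x n‖^2 - ‖x m + x n‖^2 := by
      nlinarith [hpar]
    nlinarith [e1, e2, e3, hpar']
  -- Cauchy
  have hcauchy : CauchySeq x := by
    rw [Metric.cauchySeq_iff]
    intro ε hε
    have htend : Tendsto (fun N : ℕ => 4 * ((δ' + 1 / (N + 1)) ^ 2 - δ N ^ 2)) atTop
        (𝓝 (4 * ((δ' + 0) ^ 2 - δ' ^ 2))) := by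
      apply Tendsto.const_mul
      apply Tendsto.sub
      · exact (Tendsto.add tendsto_const_nhds tendsto_one_div_add_atTop_nhds_zero_nat).pow 2
      · exact hδtend.pow 2
    have h0 : (4:ℝ) * ((δ' + 0) ^ 2 - δ' ^ 2) = 0 := by ring
    rw [h0] at htend
    have := (htend.eventually (eventually_lt_nhds (by positivity : (0:ℝ) < ε^2))).exists
    obtain ⟨N, hN⟩ := this
    refine ⟨N, fun m hm n hn => ?_⟩
    rw [dist_eq_norm]
    have hk := key N m n hm hn
    have : ‖x m - x n‖^2 < ε^2 := lt_of_le_of_lt hk hN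
    nlinarith [norm_nonneg (x m - x n)]
  obtain ⟨z, hz⟩ := cauchySeq_tendsto_of_complete hcauchy
  refine ⟨z, Set.mem_iInter.2 fun n => ?_⟩
  apply (hcl n).mem_of_tendsto hz
  filter_upwards [eventually_ge_atTop n] with k hk
  exact hanti n k hk (hxC k)

/-- Existence of a minimizer of a convex continuous coercive functional on a
nonempty closed convex set. -/
lemma exists_min_on (K : Set H) (hne : K.Nonempty) (hcl : IsClosed K) (hcv : Convex ℝ K)
    (J : H → ℝ) (hconv : ConvexOn ℝ Set.univ J) (hcont : Continuous J)
    (hgrow : ∀ M : ℝ, ∃ R > (0:ℝ), ∀ u ∈ K, R ≤ ‖u‖ → M ≤ J u) :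
    ∃ w ∈ K, ∀ u ∈ K, J w ≤ J u := by
  have sublevel : ∀ c : ℝ, IsClosed {u ∈ K | J u ≤ c} ∧ Convex ℝ {u ∈ K | J u ≤ c} := by
    intro c
    constructor
    · exact hcl.inter (isClosed_le hcont continuous_const)
    · intro a ha b hb p q hp hq hpq
      refine ⟨hcv ha.1 hb.1 hp hq hpq, ?_⟩
      calc J (p • a + q • b) ≤ p * J a + q * J b :=
            hconv.2 (Set.mem_univ a) (Set.mem_univ b) hp hq hpq
        _ ≤ p * c + q * c := by
            apply add_le_add
            · exact mul_le_mul_of_nonneg_left ha.2 hp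
            · exact mul_le_mul_of_nonneg_left hb.2 hq
        _ = c := by rw [← add_mul, hpq, one_mul]
  have bdd : ∀ c : ℝ, ∃ B, ∀ x ∈ {u ∈ K | J u ≤ c}, ‖x‖ ≤ B := by
    intro c
    obtain ⟨R, hR0, hR⟩ := hgrow (c + 1)
    refine ⟨R, fun x hx => ?_⟩
    by_contra hcon
    push_neg at hcon
    have := hR x hx.1 hcon.le
    linarith [hx.2]
  by_cases hbb : BddBelow (J '' K)
  · set m := sInf (J '' K) with hm
    set C : ℕ → Set H := fun n => {u ∈ K | J u ≤ m + 1 / (n + 1)} with hC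
    have hCne : ∀ n, (C n).Nonempty := by
      intro n
      obtain ⟨r, ⟨u, hu, rfl⟩, hr⟩ := Real.lt_sInf_add_pos (hne.image J)
        (by positivity : (0:ℝ) < 1/(n+1))
      exact ⟨u, hu, hr.le⟩
    have hanti : ∀ i j, i ≤ j → C j ⊆ C i := by
      intro i j hij u hu
      refine ⟨hu.1, hu.2.trans (add_le_add_right ?_ m)⟩
      apply one_div_le_one_div_of_le (by positivity)
      have : (i:ℝ) ≤ j := Nat.cast_le.mpr hij
      linarith
    obtain ⟨B, hB⟩ := bdd (m + 1/(((0:ℕ):ℝ)+1))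
    obtain ⟨w, hw⟩ := nested_inter hCne (fun n => (sublevel _).1) (fun n => (sublevel _).2)
      hanti hB
    rw [Set.mem_iInter] at hw
    refine ⟨w, (hw 0).1, fun u hu => ?_⟩
    have hJw : J w ≤ m := by
      have h1 : Tendsto (fun n : ℕ => m + 1/(n+1)) atTop (𝓝 (m + 0)) :=
        Tendsto.add tendsto_const_nhds tendsto_one_div_add_atTop_nhds_zero_nat
    -- J w ≤ m + 1/(n+1) for all n
      rw [add_zero] at h1
      exact ge_of_tendsto h1 (Eventually.of_forall fun n => (hw n).2)
    exact hJw.trans (csInf_le hbb ⟨u, hu, rfl⟩)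
  · exfalso
    set C : ℕ → Set H := fun n => {u ∈ K | J u ≤ -n} with hC
    have hCne : ∀ n, (C n).Nonempty := by
      intro n
      rw [bddBelow_def] at hbb
      push_neg at hbb
      obtain ⟨r, ⟨u, hu, rfl⟩, hr⟩ := hbb (-n)
      exact ⟨u, hu, hr.le⟩
    have hanti : ∀ i j, i ≤ j → C j ⊆ C i := by
      intro i j hij u hu
      refine ⟨hu.1, hu.2.trans ?_⟩
      simp only [neg_le_neg_iff, Nat.cast_le]
      exact_mod_cast hij
    obtain ⟨B, hB⟩ := bdd (-((0:ℕ):ℝ))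
    obtain ⟨w, hw⟩ := nested_inter hCne (fun n => (sublevel _).1) (fun n => (sublevel _).2)
      hanti hB
    rw [Set.mem_iInter] at hw
    obtain ⟨n, hn⟩ := exists_nat_gt (-(J w))
    have := (hw n).2
    linarith

/-- A closed convex set is weakly sequentially closed. -/
lemma weak_limit_mem {K : Set H} (hne : K.Nonempty) (hcl : IsClosed K) (hcv : Convex ℝ K)
    {x : ℕ → H} (hx : ∀ᶠ n in atTop, x n ∈ K) {z : H}
    (hw : ∀ v : H, Tendsto (fun n => (inner ℝ (x n) v : ℝ)) atTop (𝓝 (inner ℝ z v : ℝ))) :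
    z ∈ K := by
  obtain ⟨p, hpK, hp⟩ := exists_norm_eq_iInf_of_complete_convex hne hcl.isComplete hcv z
  have hchar := (norm_eq_iInf_iff_real_inner_le_zero hcv hpK).1 hp
  have hzp : (inner ℝ (z - p) (z - p) : ℝ) ≤ 0 := by
    have htd : Tendsto (fun n => (inner ℝ (x n - p) (z - p) : ℝ)) atTop
        (𝓝 (inner ℝ (z - p) (z - p) : ℝ)) := by
      have h1 : ∀ n, (inner ℝ (x n - p) (z - p) : ℝ) = inner ℝ (x n) (z - p) - inner ℝ p (z - p) := by
        intro n; rw [inner_sub_left]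
      have h2 : (inner ℝ (z - p) (z - p) : ℝ) = inner ℝ z (z - p) - inner ℝ p (z - p) := by
        rw [inner_sub_left]
      simp only [h1, h2]
      exact (hw (z - p)).sub tendsto_const_nhds
    apply le_of_tendsto htd
    filter_upwards [hx] with n hn
    have := hchar (x n) hn
    rw [real_inner_comm]
    linarith [this]
  have : z - p = 0 := by
    have := real_inner_self_nonneg (x := z - p)
    have h0 : (inner ℝ (z - p) (z - p) : ℝ) = 0 := le_antisymm hzp this
    exact inner_self_eq_zero.1 h0
  have : z = p := by rwa [sub_eq_zero] at this
  rwa [this]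

/-- If `D` is a dense subspace and `Γ` has finite-dimensional codomain, then
`D ∩ ker Γ` is dense in `ker Γ`. -/
lemma dense_inter_ker {s : ℕ} (Γ : H →L[ℝ] EuclideanSpace ℝ (Fin s))
    (D : Submodule ℝ H) (hD : Dense (D : Set H)) :
    ∀ u ∈ LinearMap.ker (Γ : H →ₗ[ℝ] EuclideanSpace ℝ (Fin s)), ∀ ε > (0:ℝ), ∃ w, w ∈ D ∧ w ∈ LinearMap.ker (Γ : H →ₗ[ℝ] EuclideanSpace ℝ (Fin s)) ∧ ‖w - u‖ < ε := by
  classical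
  haveI hfinT : FiniteDimensional ℝ (EuclideanSpace ℝ (Fin s)) := by infer_instance
  set Γₗ : H →ₗ[ℝ] EuclideanSpace ℝ (Fin s) := (Γ : H →ₗ[ℝ] EuclideanSpace ℝ (Fin s)) with hΓₗ
  set T : Submodule ℝ (EuclideanSpace ℝ (Fin s)) := Submodule.map Γₗ D with hT
  haveI : FiniteDimensional ℝ T := FiniteDimensional.finiteDimensional_submodule T
  haveI : Module.Finite ℝ T := inferInstance
  haveI : Module.Projective ℝ T := inferInstance
  have hTrange : ∀ v : H, Γ v ∈ T := by
    have hclosed : IsClosed (T : Set (EuclideanSpace ℝ (Fin s))) :=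
      Submodule.closed_of_finiteDimensional T
    intro v
    have h1 : Γ v ∈ closure (Γ '' (D : Set H)) := by
      have : Γ v ∈ Γ '' closure (D : Set H) := by
        rw [hD.closure_eq]; exact ⟨v, trivial, rfl⟩
      exact (image_closure_subset_closure_image Γ.continuous) this
    have h2 : closure (Γ '' (D : Set H)) ⊆ (T : Set (EuclideanSpace ℝ (Fin s))) := by
      apply hclosed.closure_subset_iff.2
      rintro y ⟨d, hd, rfl⟩
      exact ⟨d, hd, rfl⟩
    exact h2 h1
  -- restricted map onto T
  set f : D →ₗ[ℝ] T := (Γₗ.domRestrict D).codRestrict T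
    (fun x => ⟨(x : H), x.2, rfl⟩) with hf
  have hfsurj : LinearMap.range f = ⊤ := by
    rw [LinearMap.range_eq_top]
    rintro ⟨y, d, hd, rfl⟩
    exact ⟨⟨d, hd⟩, rfl⟩
  obtain ⟨g, hg⟩ := f.exists_rightInverse_of_surjective hfsurj
  set σ : T →ₗ[ℝ] H := D.subtype ∘ₗ g with hσ
  have hσcont : Continuous σ := σ.continuous_of_finiteDimensional
  set σc : T →L[ℝ] H := ⟨σ, hσcont⟩ with hσc
  set Cσ : ℝ := ‖σc‖ with hCσ
  have hCσ0 : 0 ≤ Cσ := by rw [hCσ]; exact norm_nonneg σc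
  have hσle : ∀ y : T, ‖σ y‖ ≤ Cσ * ‖y‖ := fun y => σc.le_opNorm y
  have hσD : ∀ y : T, σ y ∈ D := fun y => (g y).2
  have hσΓ : ∀ y : T, Γ (σ y) = (y : EuclideanSpace ℝ (Fin s)) := by
    intro y
    have : f (g y) = y := by rw [← LinearMap.comp_apply, hg, LinearMap.id_apply]
    have h2 := congrArg (Subtype.val) this
    exact h2
  intro u hu ε hε
  have hden : (0:ℝ) < 1 + Cσ * ‖Γ‖ := by positivity
  obtain ⟨v, hvD, hvu⟩ : ∃ v ∈ (D : Set H), dist u v < ε / (1 + Cσ * ‖Γ‖) := by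
    have := hD.exists_dist_lt u (by positivity : (0:ℝ) < ε / (1 + Cσ * ‖Γ‖))
    obtain ⟨v, hv1, hv2⟩ := this
    exact ⟨v, hv1, hv2⟩
  set y : T := ⟨Γ v, hTrange v⟩ with hy
  refine ⟨v - σ y, D.sub_mem hvD (hσD y), ?_, ?_⟩
  · rw [LinearMap.mem_ker]
    have : Γ (v - σ y) = Γ v - Γ (σ y) := by rw [map_sub]
    rw [show Γₗ (v - σ y) = Γ (v - σ y) from rfl, this, hσΓ y]
    simp [hy]
  · have hΓu : Γ u = 0 := hu
    have hyn : ‖y‖ = ‖Γ (v - u)‖ := by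
      have : Γ (v - u) = Γ v := by rw [map_sub, hΓu, sub_zero]
      rw [this]
      rfl
    have hvu' : ‖v - u‖ < ε / (1 + Cσ * ‖Γ‖) := by
      rwa [dist_comm, dist_eq_norm] at hvu
    calc ‖v - σ y - u‖ = ‖(v - u) - σ y‖ := by rw [sub_right_comm]
      _ ≤ ‖v - u‖ + ‖σ y‖ := norm_sub_le _ _
      _ ≤ ‖v - u‖ + Cσ * ‖y‖ := by linarith [hσle y]
      _ = ‖v - u‖ + Cσ * ‖Γ (v - u)‖ := by rw [hyn]
      _ ≤ ‖v - u‖ + Cσ * (‖Γ‖ * ‖v - u‖) :=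
          add_le_add_right (mul_le_mul_of_nonneg_left (Γ.le_opNorm (v - u)) hCσ0) _
      _ = (1 + Cσ * ‖Γ‖) * ‖v - u‖ := by ring
      _ < (1 + Cσ * ‖Γ‖) * (ε / (1 + Cσ * ‖Γ‖)) := by
          apply mul_lt_mul_of_pos_left hvu' hden
      _ = ε := by field_simp

/-- A bounded sequence in a Hilbert space with a complete system has a weakly
convergent subsequence. -/
lemma exists_weak_subseq {x : ℕ → H} {R : ℝ} (hR : ∀ n, ‖x n‖ ≤ R)
    (φ : ℕ → H) (hcomplete : Dense (Submodule.span ℝ (φ '' {i | 1 ≤ i}) : Set H)) :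
    ∃ ψ : ℕ → ℕ, StrictMono ψ ∧ ∃ z : H,
      ∀ v : H, Tendsto (fun k => (inner ℝ (x (ψ k)) v : ℝ)) atTop (𝓝 (inner ℝ z v : ℝ)) := by
  classical
  have hR0 : 0 ≤ R := (norm_nonneg (x 0)).trans (hR 0)
  set f : ℕ → (ℕ → ℝ) := fun n i => (inner ℝ (x n) (φ i) : ℝ) with hfdef
  set K : Set (ℕ → ℝ) := Set.univ.pi fun i => Set.Icc (-(R * ‖φ i‖)) (R * ‖φ i‖) with hK
  have hfK : ∀ n, f n ∈ K := by
    intro n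
    rw [Set.mem_univ_pi]
    intro i
    have h1 : |(inner ℝ (x n) (φ i) : ℝ)| ≤ ‖x n‖ * ‖φ i‖ := abs_real_inner_le_norm _ _
    have h2 : ‖x n‖ * ‖φ i‖ ≤ R * ‖φ i‖ :=
      mul_le_mul_of_nonneg_right (hR n) (norm_nonneg _)
    rw [Set.mem_Icc]
    constructor
    · linarith [neg_abs_le ((inner ℝ (x n) (φ i) : ℝ)), h1.trans h2]
    · linarith [le_abs_self ((inner ℝ (x n) (φ i) : ℝ)), h1.trans h2]
  have hKcomp : IsCompact K := isCompact_univ_pi fun i => isCompact_Icc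
  obtain ⟨L, -, ψ, hψ, hconv⟩ := hKcomp.isSeqCompact hfK
  have hpt : ∀ i, Tendsto (fun k => f (ψ k) i) atTop (𝓝 (L i)) := by
    rw [tendsto_pi_nhds] at hconv
    exact hconv
  refine ⟨ψ, hψ, ?_⟩
  -- convergence on the span
  have hspan : ∀ v ∈ Submodule.span ℝ (φ '' {i | 1 ≤ i}),
      ∃ l : ℝ, Tendsto (fun k => (inner ℝ (x (ψ k)) v : ℝ)) atTop (𝓝 l) := by
    intro v hv
    induction hv using Submodule.span_induction with
    | mem v hvmem =>
      obtain ⟨i, -, rfl⟩ := hvmem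
      exact ⟨L i, hpt i⟩
    | zero => exact ⟨0, by simp⟩
    | add v w _ _ hv hw =>
      obtain ⟨lv, hlv⟩ := hv
      obtain ⟨lw, hlw⟩ := hw
      refine ⟨lv + lw, ?_⟩
      simp only [inner_add_right]
      exact hlv.add hlw
    | smul a v _ hv =>
      obtain ⟨lv, hlv⟩ := hv
      refine ⟨a * lv, ?_⟩
      simp only [real_inner_smul_right]
      exact hlv.const_mul a
  -- Cauchy for every v
  have hcauchy : ∀ v : H, CauchySeq fun k => (inner ℝ (x (ψ k)) v : ℝ) := by
    intro v
    rw [Metric.cauchySeq_iff]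
    intro ε hε
    obtain ⟨w, hwmem, hwv⟩ : ∃ w ∈ (Submodule.span ℝ (φ '' {i | 1 ≤ i}) : Set H),
        dist v w < ε / (4 * (R + 1)) := by
      obtain ⟨w, h1, h2⟩ := hcomplete.exists_dist_lt v (by positivity : (0:ℝ) < ε / (4 * (R + 1)))
      exact ⟨w, h1, h2⟩
    obtain ⟨l, hl⟩ := hspan w hwmem
    obtain ⟨N, hN⟩ := Metric.cauchySeq_iff.1 hl.cauchySeq (ε / 2) (by positivity)
    refine ⟨N, fun m hm n hn => ?_⟩
    have hnd : ∀ k, |(inner ℝ (x (ψ k)) (v - w) : ℝ)| ≤ R * ‖v - w‖ := by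
      intro k
      exact (abs_real_inner_le_norm _ _).trans
        (mul_le_mul_of_nonneg_right (hR _) (norm_nonneg _))
    have hvw : ‖v - w‖ < ε / (4 * (R + 1)) := by rwa [dist_eq_norm] at hwv
    have hsplit : ∀ k, (inner ℝ (x (ψ k)) v : ℝ) =
        (inner ℝ (x (ψ k)) w : ℝ) + (inner ℝ (x (ψ k)) (v - w) : ℝ) := by
      intro k
      rw [inner_sub_right]
      ring
    have hRb : R * ‖v - w‖ < ε / 4 := by
      have h1 : R * ‖v - w‖ ≤ R * (ε / (4 * (R + 1))) :=
        mul_le_mul_of_nonneg_left hvw.le hR0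
      have h2 : R * (ε / (4 * (R + 1))) < ε / 4 := by
        rw [mul_comm, div_mul_eq_mul_div, div_lt_div_iff₀ (by positivity) (by norm_num : (0:ℝ) < 4)]
        nlinarith
      linarith
    have hNd := hN m hm n hn
    rw [Real.dist_eq] at hNd ⊢
    rw [hsplit m, hsplit n]
    have e : (inner ℝ (x (ψ m)) w + inner ℝ (x (ψ m)) (v - w) -
        (inner ℝ (x (ψ n)) w + inner ℝ (x (ψ n)) (v - w)) : ℝ) =
        ((inner ℝ (x (ψ m)) w - inner ℝ (x (ψ n)) w : ℝ)) +
        ((inner ℝ (x (ψ m)) (v - w) - inner ℝ (x (ψ n)) (v - w) : ℝ)) := by ring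
    rw [e]
    have key := abs_add_le ((inner ℝ (x (ψ m)) w - inner ℝ (x (ψ n)) w : ℝ))
      ((inner ℝ (x (ψ m)) (v - w) - inner ℝ (x (ψ n)) (v - w) : ℝ))
    have key2 := abs_sub ((inner ℝ (x (ψ m)) (v - w)) : ℝ) ((inner ℝ (x (ψ n)) (v - w)) : ℝ)
    have h1 := hnd m
    have h2 := hnd n
    linarith
  -- limits exist
  have hlim : ∀ v : H, ∃ l : ℝ, Tendsto (fun k => (inner ℝ (x (ψ k)) v : ℝ)) atTop (𝓝 l) :=
    fun v => cauchySeq_tendsto_of_complete (hcauchy v)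
  choose ℓ hℓ using hlim
  -- ℓ is linear and bounded
  set llin : H →ₗ[ℝ] ℝ :=
    { toFun := ℓ
      map_add' := by
        intro a b
        have h1 : Tendsto (fun k => (inner ℝ (x (ψ k)) (a + b) : ℝ)) atTop (𝓝 (ℓ a + ℓ b)) := by
          simp only [inner_add_right]
          exact (hℓ a).add (hℓ b)
        exact tendsto_nhds_unique (hℓ (a + b)) h1
      map_smul' := by
        intro c a
        have h1 : Tendsto (fun k => (inner ℝ (x (ψ k)) (c • a) : ℝ)) atTop (𝓝 (c * ℓ a)) := by
          simp only [real_inner_smul_right]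
          exact (hℓ a).const_mul c
        exact tendsto_nhds_unique (hℓ (c • a)) h1 } with hllin
  have hbound : ∀ v : H, ‖llin v‖ ≤ R * ‖v‖ := by
    intro v
    have h1 : Tendsto (fun k => |(inner ℝ (x (ψ k)) v : ℝ)|) atTop (𝓝 |ℓ v|) := (hℓ v).abs
    have h2 : ∀ k, |(inner ℝ (x (ψ k)) v : ℝ)| ≤ R * ‖v‖ := fun k =>
      (abs_real_inner_le_norm _ _).trans (mul_le_mul_of_nonneg_right (hR _) (norm_nonneg _))
    exact le_of_tendsto h1 (Eventually.of_forall h2)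
  set Lc : H →L[ℝ] ℝ := llin.mkContinuous R hbound with hLc
  set z : H := (InnerProductSpace.toDual ℝ H).symm Lc with hz
  have hzv : ∀ v : H, (inner ℝ z v : ℝ) = ℓ v := by
    intro v
    have : InnerProductSpace.toDual ℝ H z = Lc := by
      rw [hz]; exact (InnerProductSpace.toDual ℝ H).apply_symm_apply Lc
    have h2 := congrFun (congrArg (fun (T : H →L[ℝ] ℝ) => (T : H → ℝ)) this) v
    exact (by simpa [InnerProductSpace.toDual_apply_apply] using h2 : inner ℝ z v = Lc v).trans rfl
  refine ⟨z, fun v => ?_⟩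
  rw [hzv v]
  exact hℓ v

end helpers

theorem stmt3 {H : Type*} [NormedAddCommGroup H] [InnerProductSpace ℝ H]
    [CompleteSpace H]
    (s : ℕ) (Γ : H →L[ℝ] EuclideanSpace ℝ (Fin s))
    (φ : ℕ → H)
    (hcomplete : Dense (Submodule.span ℝ (φ '' {i | 1 ≤ i}) : Set H))
    (J : H → ℝ) (hconv : ConvexOn ℝ Set.univ J) (hcont : Continuous J)
    (U : Submodule ℝ H) (hUdef : U = LinearMap.ker (Γ : H →ₗ[ℝ] EuclideanSpace ℝ (Fin s)))
    (UN : ℕ → Submodule ℝ H)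
    (hUN : ∀ N, UN N = Submodule.span ℝ (φ '' Set.Icc 1 N) ⊓ U)
    (hgrow : ∀ M : ℝ, ∃ R > (0:ℝ), ∀ u ∈ U, R ≤ ‖u‖ → M ≤ J u) :
    (∃ ub ∈ U, ∀ u ∈ U, J ub ≤ J u) ∧
    (∀ N, ∃ w ∈ UN N, ∀ u ∈ UN N, J w ≤ J u) ∧
    (∀ uN : ℕ → H, (∀ N, uN N ∈ UN N ∧ ∀ u ∈ UN N, J (uN N) ≤ J u) →
      Tendsto (fun N => J (uN N)) atTop (𝓝 (⨅ u : U, J u)) ∧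
      ∃ ψ : ℕ → ℕ, StrictMono ψ ∧ ∃ ub ∈ U, (∀ u ∈ U, J ub ≤ J u) ∧
        ∀ v : H, Tendsto (fun k => (inner ℝ (uN (ψ k)) v : ℝ)) atTop (𝓝 (inner ℝ ub v : ℝ))) := by
  classical
  have hUclosed : IsClosed (U : Set H) := by
    rw [hUdef]
    exact ContinuousLinearMap.isClosed_ker Γ
  have hUconv : Convex ℝ (U : Set H) := U.convex
  have h0U : (0:H) ∈ U := U.zero_mem
  -- existence of a global minimizer on U
  obtain ⟨ub0, hub0U, hub0min⟩ := exists_min_on (U : Set H) ⟨0, h0U⟩ hUclosed hUconv J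
    hconv hcont hgrow
  -- facts about the UN N
  have hUNle : ∀ N, UN N ≤ U := by
    intro N; rw [hUN N]; exact inf_le_right
  have hUNfd : ∀ N, FiniteDimensional ℝ (UN N) := by
    intro N
    have h1 : FiniteDimensional ℝ (Submodule.span ℝ (φ '' Set.Icc 1 N)) :=
      FiniteDimensional.span_of_finite ℝ ((Set.finite_Icc 1 N).image φ)
    have h2 : UN N ≤ Submodule.span ℝ (φ '' Set.Icc 1 N) := by
      rw [hUN N]; exact inf_le_left
    exact Submodule.finiteDimensional_of_le h2
  have hUNclosed : ∀ N, IsClosed (UN N : Set H) := by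
    intro N
    haveI := hUNfd N
    exact Submodule.closed_of_finiteDimensional (UN N)
  have h0UN : ∀ N, (0:H) ∈ UN N := fun N => (UN N).zero_mem
  have hUNgrow : ∀ N, ∀ M : ℝ, ∃ R > (0:ℝ), ∀ u ∈ (UN N : Set H), R ≤ ‖u‖ → M ≤ J u := by
    intro N M
    obtain ⟨R, hR0, hR⟩ := hgrow M
    exact ⟨R, hR0, fun u hu h => hR u (hUNle N hu) h⟩
  have part2 : ∀ N, ∃ w ∈ UN N, ∀ u ∈ UN N, J w ≤ J u := by
    intro N
    exact exists_min_on (UN N : Set H) ⟨0, h0UN N⟩ (hUNclosed N) (UN N).convex J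
      hconv hcont (hUNgrow N)
  refine ⟨⟨ub0, hub0U, hub0min⟩, part2, ?_⟩
  intro uN huN
  -- infimum value
  have hbdd : BddBelow (Set.range fun u : U => J u) := by
    refine ⟨J ub0, ?_⟩
    rintro r ⟨u, rfl⟩
    exact hub0min u u.2
  have hinf_eq : (⨅ u : U, J u) = J ub0 := by
    apply le_antisymm
    · exact ciInf_le hbdd ⟨ub0, hub0U⟩
    · exact le_ciInf fun u => hub0min u u.2
  have hUNmono : ∀ m n : ℕ, m ≤ n → UN m ≤ UN n := by
    intro m n hmn
    rw [hUN m, hUN n]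
    apply inf_le_inf_right
    apply Submodule.span_mono
    exact Set.image_mono (Set.Icc_subset_Icc_right (Nat.cast_le.mpr hmn))
  have hmemU : ∀ n, uN n ∈ U := fun n => hUNle n (huN n).1
  have hlow : ∀ n, J ub0 ≤ J (uN n) := fun n => hub0min _ (hmemU n)
  -- the approximation step
  have happrox : ∀ ε > (0:ℝ), ∃ N₀ : ℕ, ∀ n ≥ N₀, J (uN n) < J ub0 + ε := by
    intro ε hε
    obtain ⟨δ, hδ0, hδ⟩ := Metric.continuous_iff.1 hcont ub0 ε hε
    obtain ⟨w, hwD, hwker, hwub⟩ := dense_inter_ker Γ _ hcomplete ub0 (hUdef ▸ hub0U) δ hδ0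
    obtain ⟨t, htsub, htmem⟩ := Submodule.mem_span_finite_of_mem_span hwD
    have hchoice : ∀ y ∈ t, ∃ i : ℕ, 1 ≤ i ∧ φ i = y := by
      intro y hy
      obtain ⟨i, hi, rfl⟩ := htsub hy
      exact ⟨i, hi, rfl⟩
    set idx : H → ℕ := fun y => if h : y ∈ t then (hchoice y h).choose else 0 with hidx
    set N₀ : ℕ := t.sup idx with hN₀
    have htsub' : (t : Set H) ⊆ φ '' Set.Icc 1 N₀ := by
      intro y hy
      have hy' : y ∈ t := hy
      obtain ⟨hi1, hiφ⟩ := (hchoice y hy').choose_spec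
      refine ⟨(hchoice y hy').choose, ⟨hi1, ?_⟩, hiφ⟩
      have : idx y = (hchoice y hy').choose := by rw [hidx]; exact dif_pos hy'
      rw [← this]
      exact Finset.le_sup hy'
    have hwspan : w ∈ Submodule.span ℝ (φ '' Set.Icc 1 N₀) :=
      Submodule.span_mono htsub' htmem
    refine ⟨N₀, fun n hn => ?_⟩
    have hwUN : w ∈ UN n := by
      rw [hUN n]
      refine ⟨Submodule.span_mono (Set.image_mono ?_) hwspan, by rw [hUdef]; exact hwker⟩
      exact Set.Icc_subset_Icc_right (Nat.cast_le.mpr hn)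
    have h1 : J (uN n) ≤ J w := (huN n).2 w hwUN
    have h2 : dist (J w) (J ub0) < ε := hδ w (by rwa [dist_eq_norm])
    rw [Real.dist_eq] at h2
    have := abs_lt.1 h2
    linarith [this.2]
  -- part (a)
  have parta : Tendsto (fun N => J (uN N)) atTop (𝓝 (⨅ u : U, J u)) := by
    rw [hinf_eq]
    rw [Metric.tendsto_atTop]
    intro ε hε
    obtain ⟨N₀, hN₀⟩ := happrox ε hε
    refine ⟨N₀, fun n hn => ?_⟩
    rw [Real.dist_eq, abs_lt]
    constructor
    · linarith [hlow n]
    · linarith [hN₀ n hn]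
  refine ⟨parta, ?_⟩
  -- boundedness of the minimizers
  obtain ⟨R, hR0, hRg⟩ := hgrow (J 0 + 1)
  have hbound : ∀ n, ‖uN n‖ ≤ R := by
    intro n
    by_contra hcon
    push_neg at hcon
    have h1 := hRg (uN n) (hmemU n) hcon.le
    have h2 : J (uN n) ≤ J 0 := (huN n).2 0 (h0UN n)
    linarith
  obtain ⟨ψ, hψ, z, hz⟩ := exists_weak_subseq hbound φ hcomplete
  have hzU : z ∈ U := by
    apply weak_limit_mem (K := (U : Set H)) ⟨0, h0U⟩ hUclosed hUconv
      (Eventually.of_forall fun k => hUNle _ (huN (ψ k)).1) hz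
  have hzmin : ∀ u ∈ U, J z ≤ J u := by
    have hJz : J z ≤ J ub0 := by
      apply le_of_forall_pos_le_add
      intro ε hε
      set C : Set H := {u | u ∈ (U : Set H) ∧ J u ≤ J ub0 + ε} with hC
      have hCcl : IsClosed C := hUclosed.inter (isClosed_le hcont continuous_const)
      have hCcv : Convex ℝ C := by
        intro a ha b hb p q hp hq hpq
        refine ⟨hUconv ha.1 hb.1 hp hq hpq, ?_⟩
        calc J (p • a + q • b) ≤ p * J a + q * J b :=
              hconv.2 (Set.mem_univ a) (Set.mem_univ b) hp hq hpq
          _ ≤ p * (J ub0 + ε) + q * (J ub0 + ε) := by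
              apply add_le_add
              · exact mul_le_mul_of_nonneg_left ha.2 hp
              · exact mul_le_mul_of_nonneg_left hb.2 hq
          _ = J ub0 + ε := by rw [← add_mul, hpq, one_mul]
      obtain ⟨N₀, hN₀⟩ := happrox ε hε
      have hCmem : ∀ᶠ k in atTop, uN (ψ k) ∈ C := by
        filter_upwards [eventually_ge_atTop N₀] with k hk
        exact ⟨hUNle _ (huN (ψ k)).1, (hN₀ (ψ k) (hk.trans (hψ.le_apply))).le⟩
      exact (weak_limit_mem (K := C) ⟨ub0, hub0U, by linarith⟩ hCcl hCcv hCmem hz).2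
    intro u hu
    exact hJz.trans (hub0min u hu)
  exact ⟨ψ, hψ, z, hzU, hzmin, hz⟩
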